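/- If a connected simple graph G contains a cycle of length ℓ, then for all t ∈ {1,…,ℓ}, χ_t(G) ≤ gcd(t, ℓ). -/

import Mathlib

open SimpleGraph Function

/-- A circular `k`-colouring of the oriented edges of `G`: every colour class is nonempty
(on adjacent pairs), and the colour increases by one along every non-backtracking step. -/
def IsCircularColoring {V : Type*} (G : SimpleGraph V) (k : ℕ) (c : V → V → ZMod k) : Prop :=
  (∀ j : ZMod k, ∃ v w, G.Adj v w ∧ c v w = j) ∧
  ∀ v w z, G.Adj v w → G.Adj w z → z ≠ v → c w z = c v w + 1

/-- `G` is circularly `k`-partite. -/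
def CircularlyPartite {V : Type*} (G : SimpleGraph V) (k : ℕ) : Prop :=
  0 < k ∧ ∃ c : V → V → ZMod k, IsCircularColoring G k c

/-- The oriented edge periodic colouring number: the largest `k` such that `G` is
circularly `k`-partite. -/
noncomputable def chiO {V : Type*} (G : SimpleGraph V) : ℕ :=
  sSup {k | CircularlyPartite G k}

/-- `G` is a path graph. -/
def IsPathGraph {V : Type*} (G : SimpleGraph V) : Prop :=
  ∃ n, Nonempty (G ≃g pathGraph n)

/-- `G` is an extended star graph: a tree with exactly one vertex of degree at least 3. -/
def IsExtendedStar {V : Type*} [Fintype V] (G : SimpleGraph V) [DecidableRel G.Adj] : Prop :=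
  G.IsTree ∧ ∃! v : V, 3 ≤ G.degree v

/-- A (not necessarily proper) vertex colouring is `t`-periodic if every path of length `t`
has endpoints of the same colour. -/
def IsPeriodicColoring {V : Type*} (G : SimpleGraph V) (t : ℕ) {α : Type*} (c : V → α) : Prop :=
  ∀ (u v : V) (p : G.Walk u v), p.IsPath → p.length = t → c u = c v

/-- The vertex `t`-periodic colouring number: the largest `k` such that `G` admits a
`t`-periodic colouring using exactly `k` colours. -/
noncomputable def chiT {V : Type*} (G : SimpleGraph V) (t : ℕ) : ℕ :=
  sSup {k | ∃ c : V → Fin k, Surjective c ∧ IsPeriodicColoring G t c}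

/-- A proper edge colouring: distinct edges sharing an endpoint get distinct colours. -/
def IsProperEdgeColoring {V : Type*} (G : SimpleGraph V) {α : Type*} (c : G.edgeSet → α) : Prop :=
  ∀ e f : G.edgeSet, e ≠ f → (∃ v, v ∈ (e : Sym2 V) ∧ v ∈ (f : Sym2 V)) → c e ≠ c f

/-- The edge chromatic number of `G`. -/
noncomputable def chiStar {V : Type*} (G : SimpleGraph V) : ℕ :=
  sInf {k | ∃ c : G.edgeSet → Fin k, IsProperEdgeColoring G c}

namespace Stmt15Aux

variable {V : Type*} {G : SimpleGraph V}

/-- Prefix of a walk: the first `n` edges. -/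
def wtake : ∀ {u v : V}, (p : G.Walk u v) → (n : ℕ) → G.Walk u (p.getVert n)
  | _, _, .nil, _ => .nil
  | _, _, .cons _ _, 0 => .nil
  | _, _, .cons h q, (n+1) => .cons h (wtake q n)

lemma wtake_support : ∀ {u v : V} (p : G.Walk u v) (n : ℕ),
    (wtake p n).support = p.support.take (n+1)
  | _, _, .nil, n => by simp [wtake]
  | _, _, .cons h q, 0 => by simp [wtake]; rfl
  | _, _, .cons h q, (n+1) => by
      simp [wtake, wtake_support q n]

lemma wtake_length : ∀ {u v : V} (p : G.Walk u v) (n : ℕ),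
    (wtake p n).length = min n p.length
  | _, _, .nil, n => by simp [wtake]
  | _, _, .cons h q, 0 => by simp [wtake]; rfl
  | _, _, .cons h q, (n+1) => by
      simp [wtake, wtake_length q n, Nat.succ_min_succ]

lemma wtake_isPath {u v : V} {p : G.Walk u v} (hp : p.IsPath) (n : ℕ) :
    (wtake p n).IsPath := by
  apply SimpleGraph.Walk.IsPath.mk'
  rw [wtake_support]
  exact hp.support_nodup.sublist (List.take_sublist _ _)

/-- Suffix of a walk: remove the first `n` edges. -/
def wdrop : ∀ {u v : V}, (p : G.Walk u v) → (n : ℕ) → G.Walk (p.getVert n) v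
  | _, _, .nil, _ => .nil
  | _, _, .cons h q, 0 => .cons h q
  | _, _, .cons _ q, (n+1) => wdrop q n

lemma wdrop_support_subset : ∀ {u v : V} (p : G.Walk u v) (n : ℕ),
    (wdrop p n).support ⊆ p.support
  | _, _, .nil, n => List.Subset.refl _
  | _, _, .cons h q, 0 => List.Subset.refl _
  | _, _, .cons h q, (n+1) => by
      refine List.Subset.trans (wdrop_support_subset q n) ?_
      simp [SimpleGraph.Walk.support_cons]

lemma wdrop_length : ∀ {u v : V} (p : G.Walk u v) (n : ℕ),
    (wdrop p n).length = p.length - n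
  | _, _, .nil, n => by simp [wdrop]
  | _, _, .cons h q, 0 => by simp [wdrop]; rfl
  | _, _, .cons h q, (n+1) => by
      simp [wdrop, wdrop_length q n]

lemma wdrop_isPath : ∀ {u v : V} {p : G.Walk u v}, p.IsPath → ∀ (n : ℕ),
    (wdrop p n).IsPath
  | _, _, .nil, hp, n => hp
  | _, _, .cons h q, hp, 0 => hp
  | _, _, .cons h q, hp, (n+1) => wdrop_isPath hp.of_cons n

/-- The walk along a cyclically repeating sequence of adjacent vertices. -/
def seg (f : ℕ → V) (hadj : ∀ n, G.Adj (f n) (f (n+1))) : ∀ (i m : ℕ), G.Walk (f i) (f (i + m))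
  | _, 0 => .nil
  | i, (m+1) => .cons (hadj i) ((seg f hadj (i+1) m).copy rfl (congrArg f (by omega)))

lemma seg_length (f : ℕ → V) (hadj : ∀ n, G.Adj (f n) (f (n+1))) :
    ∀ (i m : ℕ), (seg f hadj i m).length = m
  | _, 0 => rfl
  | i, (m+1) => by simp [seg, seg_length f hadj (i+1) m]

lemma seg_support (f : ℕ → V) (hadj : ∀ n, G.Adj (f n) (f (n+1))) :
    ∀ (i m : ℕ), (seg f hadj i m).support = (List.range (m+1)).map (fun r => f (i + r))
  | _, 0 => by simp [seg, List.range_succ]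
  | i, (m+1) => by
      rw [seg, SimpleGraph.Walk.support_cons, SimpleGraph.Walk.support_copy,
        seg_support f hadj (i+1) m, List.range_succ_eq_map (n := m+1)]
      simp only [List.map_cons, List.map_map, Nat.add_zero]
      congr 1
      apply List.map_congr_left
      intro r _
      simp only [comp_apply]
      congr 1
      omega

end Stmt15Aux

namespace Stmt15Aux

open SimpleGraph Walk

variable {V : Type*} {G : SimpleGraph V}

lemma path_getVert_inj : ∀ {u v : V} {p : G.Walk u v}, p.IsPath →
    ∀ i j, i ≤ p.length → j ≤ p.length → p.getVert i = p.getVert j → i = j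
  | _, _, .nil, _, i, j, hi, hj, _ => by
      simp only [Walk.length_nil, Nat.le_zero] at hi hj; omega
  | _, _, .cons _ _, _, 0, 0, _, _, _ => rfl
  | u, _, .cons h q, hp, 0, (j+1), _, hj, hij => by
      exfalso
      have hmem : q.getVert j ∈ q.support :=
        Walk.mem_support_iff_exists_getVert.mpr ⟨j, rfl, by simpa using hj⟩
      rw [Walk.cons_isPath_iff] at hp
      rw [show (Walk.cons h q).getVert 0 = u from rfl,
        show (Walk.cons h q).getVert (j+1) = q.getVert j from rfl] at hij
      rw [← hij] at hmem
      exact hp.2 hmem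
  | u, _, .cons h q, hp, (i+1), 0, hi, _, hij => by
      exfalso
      have hmem : q.getVert i ∈ q.support :=
        Walk.mem_support_iff_exists_getVert.mpr ⟨i, rfl, by simpa using hi⟩
      rw [Walk.cons_isPath_iff] at hp
      rw [show (Walk.cons h q).getVert 0 = u from rfl,
        show (Walk.cons h q).getVert (i+1) = q.getVert i from rfl] at hij
      rw [hij] at hmem
      exact hp.2 hmem
  | _, _, .cons h q, hp, (i+1), (j+1), hi, hj, hij => by
      have := path_getVert_inj ((Walk.cons_isPath_iff _ _).mp hp).1 i j
        (by simpa using hi) (by simpa using hj) hij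
      omega

/-- `getVert` is injective on `[0, ℓ)` for a cycle of length `ℓ`. -/
lemma cycle_getVert_inj {u : V} {p : G.Walk u u} (hc : p.IsCycle) :
    ∀ i j, i < p.length → j < p.length → p.getVert i = p.getVert j → i = j := by
  have hnn : ¬ p.Nil := by
    rw [Walk.not_nil_iff_lt_length]
    have := hc.three_le_length
    omega
  have hqpath : p.tail.IsPath := by
    apply Walk.IsPath.mk'
    rw [Walk.support_tail_of_not_nil p hnn]
    exact hc.support_nodup
  have hqlen : p.tail.length + 1 = p.length := Walk.length_tail_add_one hnn
  have hqv : ∀ n, p.tail.getVert n = p.getVert (n+1) := fun n => Walk.getVert_tail p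
  have key : ∀ i j, i < p.length → j < p.length → p.getVert i = p.getVert j → i = 0 → j = 0 := by
    intro i j hi hj hij hi0
    subst hi0
    by_contra hj0
    obtain ⟨j, rfl⟩ := Nat.exists_eq_add_one_of_ne_zero hj0
    have h1 : p.tail.getVert j = p.tail.getVert p.tail.length := by
      rw [Walk.getVert_length, hqv, ← hij, Walk.getVert_zero]
    have := path_getVert_inj hqpath j p.tail.length (by omega) le_rfl h1
    omega
  intro i j hi hj hij
  match i, j with
  | 0, 0 => rfl
  | 0, (j+1) => exact (key 0 (j+1) hi hj hij rfl).symm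
  | (i+1), 0 => exact key 0 (i+1) hj hi hij.symm rfl
  | (i+1), (j+1) =>
    have := path_getVert_inj hqpath i j (by omega) (by omega)
      (by rw [hqv, hqv]; exact hij)
    omega

end Stmt15Aux


/-- if `G` has a cycle of length `ℓ`, then `χ_t(G) ≤ gcd(t, ℓ)` for
all `t ∈ {1, …, ℓ}`. -/
theorem stmt_15 {V : Type*} [Fintype V] (G : SimpleGraph V) (hG : G.Connected)
    (ℓ : ℕ) (hcyc : ∃ (u : V) (p : G.Walk u u), p.IsCycle ∧ p.length = ℓ) :
    ∀ t, 1 ≤ t → t ≤ ℓ → chiT G t ≤ Nat.gcd t ℓ := by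
  classical
  intro t ht1 htl
  obtain ⟨u, p, hpc, hlen⟩ := hcyc
  have hl3 : 3 ≤ ℓ := by
    have := hpc.three_le_length; omega
  have hl0 : 0 < ℓ := by omega
  set g := Nat.gcd t ℓ with hgdef
  have hg0 : 0 < g := Nat.gcd_pos_of_pos_left ℓ ht1
  have hgl : g ≤ ℓ := Nat.le_of_dvd hl0 (Nat.gcd_dvd_right t ℓ)
  -- the cyclic vertex function
  set f : ℕ → V := fun n => p.getVert (n % ℓ) with hfdef
  have hmod : ∀ {a b : ℕ}, a % ℓ = b % ℓ → f a = f b := by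
    intro a b h
    show p.getVert (a % ℓ) = p.getVert (b % ℓ)
    rw [h]
  have hfeq : ∀ {a b : ℕ}, f a = f b → a % ℓ = b % ℓ := by
    intro a b h
    exact Stmt15Aux.cycle_getVert_inj hpc _ _ (by rw [hlen]; exact Nat.mod_lt _ hl0)
      (by rw [hlen]; exact Nat.mod_lt _ hl0) h
  have hadjf : ∀ n, G.Adj (f n) (f (n+1)) := by
    intro n
    have h1 : n % ℓ < ℓ := Nat.mod_lt _ hl0
    have hadj := p.adj_getVert_succ (i := n % ℓ) (by rw [hlen]; exact h1)
    have hstep : (n+1) % ℓ = (n % ℓ + 1) % ℓ := by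
      rw [Nat.add_mod, Nat.mod_eq_of_lt (show 1 < ℓ by omega)]
    rcases Nat.lt_or_ge (n % ℓ + 1) ℓ with h2 | h2
    · have hnext : f (n+1) = p.getVert (n % ℓ + 1) := by
        show p.getVert ((n+1) % ℓ) = _
        rw [hstep, Nat.mod_eq_of_lt h2]
      rw [hnext]; exact hadj
    · have h3 : n % ℓ + 1 = ℓ := by omega
      have hnext : f (n+1) = p.getVert (n % ℓ + 1) := by
        show p.getVert ((n+1) % ℓ) = _
        rw [hstep, h3, Nat.mod_self,
          show p.getVert ℓ = u by rw [← hlen]; exact p.getVert_length, p.getVert_zero]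
      rw [hnext]; exact hadj
  have hcancel : ∀ {a b : ℕ}, a % ℓ = b % ℓ → a ≤ b → b - a < ℓ → a = b := by
    intro a b h hab hlt
    have h2 : ℓ ∣ b - a := (Nat.modEq_iff_dvd' hab).mp h
    rcases Nat.eq_zero_or_pos (b - a) with h3 | h3
    · omega
    · have := Nat.le_of_dvd h3 h2; omega
  have hsegpath : ∀ i m, m < ℓ → (Stmt15Aux.seg f hadjf i m).IsPath := by
    intro i m hm
    apply SimpleGraph.Walk.IsPath.mk'
    rw [Stmt15Aux.seg_support]
    refine List.Nodup.map_on ?_ List.nodup_range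
    intro r hr s hs hfs
    rw [List.mem_range] at hr hs
    have h1 := hfeq hfs
    rcases le_total r s with hrs | hrs
    · have := hcancel h1 (by omega) (by omega); omega
    · have := hcancel h1.symm (by omega) (by omega); omega
  -- now the colouring argument
  unfold chiT
  refine csSup_le' ?_
  rintro k ⟨c, hcsurj, hcper⟩
  have hstep : ∀ i, c (f i) = c (f (i + t)) := by
    intro i
    rcases eq_or_lt_of_le htl with rfl | htlt
    · exact congrArg c (hmod (Nat.add_mod_right i t)).symm
    · exact hcper (f i) (f (i+t)) (Stmt15Aux.seg f hadjf i t) (hsegpath i t htlt)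
        (Stmt15Aux.seg_length f hadjf i t)
  have hstepk : ∀ i m, c (f i) = c (f (i + t * m)) := by
    intro i m
    induction m with
    | zero => simp
    | succ m ih =>
      rw [ih, hstep (i + t * m)]
      exact congrArg c (congrArg f (by ring))
  have hgstep : ∀ i, c (f i) = c (f (i + g)) := by
    intro i
    rcases eq_or_lt_of_le hgl with hgeq | hglt
    · exact congrArg c (hmod (by rw [hgeq, Nat.add_mod_right])).symm
    · obtain ⟨m, _, hm⟩ := Nat.exists_mul_mod_eq_gcd (show Nat.gcd t ℓ < ℓ from hglt)
      obtain ⟨q', hq'⟩ : ∃ q', t * m = g + ℓ * q' := by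
        refine ⟨t * m / ℓ, ?_⟩
        rw [hgdef, ← hm]
        exact (Nat.mod_add_div (t*m) ℓ).symm
      rw [hstepk i m]
      apply congrArg c
      apply hmod
      rw [hq', ← Nat.add_assoc, Nat.add_mul_mod_self_left]
  have hgk : ∀ i m, c (f i) = c (f (i + g * m)) := by
    intro i m
    induction m with
    | zero => simp
    | succ m ih =>
      rw [ih, hgstep (i + g * m)]
      exact congrArg c (congrArg f (by ring))
  have hmodg : ∀ i, c (f i) = c (f (i % g)) := by
    intro i
    have h1 : i % g + g * (i / g) = i := Nat.mod_add_div i g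
    calc c (f i) = c (f (i % g + g * (i/g))) := by rw [h1]
    _ = c (f (i % g)) := (hgk (i % g) (i / g)).symm
  -- every vertex has a path to the cycle meeting the cycle only at its end
  have hQ : ∀ (x w : V) (_ : G.Walk x w), (∃ i, w = f i) →
      ∃ j, ∃ q : G.Walk x (f j), q.IsPath ∧ ∀ z ∈ q.support, (∃ i', z = f i') → z = f j := by
    intro x w r
    induction r with
    | nil =>
      rintro ⟨i, hi⟩
      refine ⟨i, SimpleGraph.Walk.nil.copy rfl hi, ?_, ?_⟩
      · rw [SimpleGraph.Walk.isPath_copy]; exact SimpleGraph.Walk.IsPath.nil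
      · intro z hz _
        rw [SimpleGraph.Walk.support_copy, SimpleGraph.Walk.support_nil] at hz
        simp only [List.mem_singleton] at hz
        rw [hz]; exact hi
    | @cons a b w' h r' ih =>
      intro hw
      obtain ⟨j, q', hq'p, hq'c⟩ := ih hw
      by_cases ha : ∃ i', a = f i'
      · obtain ⟨i', hi'⟩ := ha
        refine ⟨i', SimpleGraph.Walk.nil.copy rfl hi', ?_, ?_⟩
        · rw [SimpleGraph.Walk.isPath_copy]; exact SimpleGraph.Walk.IsPath.nil
        · intro z hz _
          rw [SimpleGraph.Walk.support_copy, SimpleGraph.Walk.support_nil] at hz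
          simp only [List.mem_singleton] at hz
          rw [hz]; exact hi'
      · by_cases hmem : a ∈ q'.support
        · exact ⟨j, q'.dropUntil a hmem, hq'p.dropUntil hmem,
            fun z hz hz' => hq'c z (SimpleGraph.Walk.support_dropUntil_subset q' hmem hz) hz'⟩
        · refine ⟨j, SimpleGraph.Walk.cons h q', hq'p.cons hmem, ?_⟩
          intro z hz hz'
          rw [SimpleGraph.Walk.support_cons] at hz
          rcases List.mem_cons.mp hz with rfl | hz2
          · exact absurd hz' ha
          · exact hq'c z hz2 hz'
  -- main induction: every vertex has the colour of some cycle vertex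
  have key : ∀ d (x : V) (j : ℕ) (q : G.Walk x (f j)), q.IsPath →
      (∀ z ∈ q.support, (∃ i', z = f i') → z = f j) → q.length = d → ∃ i, c x = c (f i) := by
    intro d
    induction d using Nat.strong_induction_on with
    | _ d ih =>
    intro x j q hqp hqc hql
    rcases Nat.eq_zero_or_pos d with rfl | hd0
    · have hx : x = f j := q.eq_of_length_eq_zero hql
      exact ⟨j, by rw [hx]⟩
    rcases Nat.lt_or_ge d t with hdt | hdt
    · -- 1 ≤ d < t : extend along the cycle
      set m := t - d with hmdef
      have hml : m < ℓ := by omega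
      have hpath : (q.append (Stmt15Aux.seg f hadjf j m)).IsPath := by
        rw [SimpleGraph.Walk.isPath_def, SimpleGraph.Walk.support_append, List.nodup_append]
        refine ⟨hqp.support_nodup, ((hsegpath j m hml).support_nodup).sublist (List.tail_sublist _), ?_⟩
        intro z hz1 z' hz2 hzz'
        subst hzz'
        rw [Stmt15Aux.seg_support, List.range_succ_eq_map, List.map_cons, List.tail_cons,
          List.map_map] at hz2
        obtain ⟨r, hr, hz⟩ := List.mem_map.mp hz2
        rw [List.mem_range] at hr
        have hzf : z = f (j + r + 1) := by
          rw [← hz]; rfl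
        have hzj := hqc z hz1 ⟨j + r + 1, hzf⟩
        rw [hzj] at hzf
        have hmm := hfeq hzf
        have := hcancel hmm (by omega) (by omega)
        omega
      have hlen2 : (q.append (Stmt15Aux.seg f hadjf j m)).length = t := by
        rw [SimpleGraph.Walk.length_append, Stmt15Aux.seg_length, hql]; omega
      exact ⟨j + m, hcper x (f (j+m)) _ hpath hlen2⟩
    · -- d ≥ t : cut off the first t edges
      have hyc : c x = c (q.getVert t) :=
        hcper x (q.getVert t) (Stmt15Aux.wtake q t) (Stmt15Aux.wtake_isPath hqp t)
          (by rw [Stmt15Aux.wtake_length]; omega)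
      obtain ⟨i, hi⟩ := ih (d - t) (by omega) (q.getVert t) j (Stmt15Aux.wdrop q t)
        (Stmt15Aux.wdrop_isPath hqp t)
        (fun z hz hz' => hqc z (Stmt15Aux.wdrop_support_subset q t hz) hz')
        (by rw [Stmt15Aux.wdrop_length, hql])
      exact ⟨i, hyc.trans hi⟩
  have hB : ∀ x : V, ∃ i, c x = c (f i) := by
    intro x
    obtain ⟨r⟩ := hG.preconnected x (f 0)
    obtain ⟨j, q, hq1, hq2⟩ := hQ x (f 0) r ⟨0, rfl⟩
    exact key q.length x j q hq1 hq2 rfl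
  have hsurj : Surjective (fun a : Fin g => c (f a.val)) := by
    intro x
    obtain ⟨v, hv⟩ := hcsurj x
    obtain ⟨i, hi⟩ := hB v
    refine ⟨⟨i % g, Nat.mod_lt _ hg0⟩, ?_⟩
    simp only
    rw [← hmodg i, ← hi, hv]
  simpa using Fintype.card_le_of_surjective _ hsurj
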